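/- arXiv:0906.1912 — 3 statements merged into one kernel-verified Lean document; each statement's English description precedes it below -/
import Mathlib

section
/- Let ψ, ζ, ν ∈ Ψ(a,b) with ν(p) = ψ(p)·ζ(p), and suppose |T_λ f|_{q(p)} ≤ λ^{d/p - d}·|f|_p for all p ∈ (a,b), where q(p) = p/(p-1). Define ν*(q) = ν(q/(q-1)) and the fundamental function φ(G(ζ), δ) = sup_{p∈(a,b)} δ^{1/p}/ζ(p). Then λ^d·‖T_λ f‖_{G(ν*)} ≤ φ(G(ζ), λ^d)·‖f‖_{G(ψ)}. -/
open MeasureTheory Real Set ENNReal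

/-- Theorem 2 of the paper.  If `ν = ψ · ζ` on `(a,b)` and
`|T_λ f|_{q(p)} ≤ λ^{d/p - d} |f|_p` for all `p ∈ (a,b)` (with `q(p) = p/(p-1)`),
then `λ^d ‖T_λ f‖_{G(ν*)} ≤ φ(G(ζ), λ^d) ‖f‖_{G(ψ)}`, where
`ν*(q) = ν(q/(q-1))` (so `ν*(q(p)) = ν(p)`) and
`φ(G(ζ), δ) = sup_{p ∈ (a,b)} δ^{1/p}/ζ(p)` is the fundamental function. -/
theorem stmt10 (d : ℕ) (a b : ℝ) (ha : 1 ≤ a) (hab : a < b) (hb : b ≤ 2)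
    (lam : ℝ) (hlam : 1 ≤ lam)
    (T : ((Fin d → ℝ) → ℝ) → ((Fin d → ℝ) → ℝ))
    (ψ ζ ν : ℝ → ℝ)
    (hψpos : ∀ p ∈ Set.Ioo a b, 0 < ψ p) (hζpos : ∀ p ∈ Set.Ioo a b, 0 < ζ p)
    (hψinf : 0 < sInf (ψ '' Set.Ioo a b)) (hζinf : 0 < sInf (ζ '' Set.Ioo a b))
    (hν : ∀ p ∈ Set.Ioo a b, ν p = ψ p * ζ p)
    (f : (Fin d → ℝ) → ℝ)
    (hStein : ∀ p ∈ Set.Ioo a b,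
      eLpNorm (T f) (ENNReal.ofReal (p / (p - 1))) volume ≤
        ENNReal.ofReal (lam ^ ((d : ℝ) / p - d)) *
          eLpNorm f (ENNReal.ofReal p) volume) :
    ENNReal.ofReal (lam ^ (d : ℝ)) *
        (⨆ p ∈ Set.Ioo a b,
          eLpNorm (T f) (ENNReal.ofReal (p / (p - 1))) volume /
            ENNReal.ofReal (ν p)) ≤
      ENNReal.ofReal (⨆ p : Set.Ioo a b, (lam ^ (d : ℝ)) ^ (1 / p.1) / ζ p.1) *
        ⨆ p ∈ Set.Ioo a b,
          eLpNorm f (ENNReal.ofReal p) volume / ENNReal.ofReal (ψ p) := by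
  have hlam0 : (0:ℝ) < lam := lt_of_lt_of_le one_pos hlam
  have hlamd : (0:ℝ) ≤ lam ^ (d:ℝ) := by positivity
  have hlamd1 : (1:ℝ) ≤ lam ^ (d:ℝ) := Real.one_le_rpow hlam (by positivity)
  -- boundedness of the fundamental-function family
  have hbdd : BddAbove (Set.range fun p : Set.Ioo a b =>
      (lam ^ (d:ℝ)) ^ (1 / p.1) / ζ p.1) := by
    refine ⟨lam ^ (d:ℝ) / sInf (ζ '' Set.Ioo a b), ?_⟩
    rintro x ⟨⟨p, hp⟩, rfl⟩
    have hp1 : (1:ℝ) < p := lt_of_le_of_lt ha hp.1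
    have hp0 : (0:ℝ) < p := lt_trans one_pos hp1
    have hsinf_le : sInf (ζ '' Set.Ioo a b) ≤ ζ p :=
      csInf_le ⟨0, by rintro y ⟨q, hq, rfl⟩; exact (hζpos q hq).le⟩ ⟨p, hp, rfl⟩
    have h1 : (lam ^ (d:ℝ)) ^ (1 / p) ≤ lam ^ (d:ℝ) := by
      calc (lam ^ (d:ℝ)) ^ (1 / p) ≤ (lam ^ (d:ℝ)) ^ (1:ℝ) :=
            Real.rpow_le_rpow_of_exponent_le hlamd1
              (by rw [div_le_one hp0]; exact hp1.le)
        _ = lam ^ (d:ℝ) := Real.rpow_one _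
    exact div_le_div₀ hlamd h1 hζinf hsinf_le
  rw [ENNReal.mul_iSup]
  refine iSup_le fun p => ?_
  rw [ENNReal.mul_iSup]
  refine iSup_le fun hp => ?_
  have hp1 : (1:ℝ) < p := lt_of_le_of_lt ha hp.1
  have hp0 : (0:ℝ) < p := lt_trans one_pos hp1
  have hψp := hψpos p hp
  have hζp := hζpos p hp
  have hkey : lam ^ (d:ℝ) * lam ^ ((d:ℝ) / p - d) = lam ^ ((d:ℝ) / p) := by
    rw [← Real.rpow_add hlam0]; ring_nf
  have hφ : lam ^ ((d:ℝ) / p) / ζ p ≤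
      ⨆ q : Set.Ioo a b, (lam ^ (d:ℝ)) ^ (1 / q.1) / ζ q.1 := by
    have h := le_ciSup hbdd (⟨p, hp⟩ : Set.Ioo a b)
    rwa [← Real.rpow_mul hlam0.le, mul_one_div] at h
  calc ENNReal.ofReal (lam ^ (d:ℝ)) *
        (eLpNorm (T f) (ENNReal.ofReal (p / (p - 1))) volume / ENNReal.ofReal (ν p))
      ≤ ENNReal.ofReal (lam ^ (d:ℝ)) *
        ((ENNReal.ofReal (lam ^ ((d:ℝ) / p - d)) * eLpNorm f (ENNReal.ofReal p) volume) /
          ENNReal.ofReal (ν p)) := by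
        gcongr
        exact hStein p hp
    _ = (ENNReal.ofReal (lam ^ ((d:ℝ) / p)) / ENNReal.ofReal (ζ p)) *
        (eLpNorm f (ENNReal.ofReal p) volume / ENNReal.ofReal (ψ p)) := by
        rw [hν p hp, ENNReal.ofReal_mul hψp.le, ← mul_div_assoc, ← mul_assoc,
          ← ENNReal.ofReal_mul hlamd, hkey]
        simp only [div_eq_mul_inv]
        rw [ENNReal.mul_inv (Or.inl (ENNReal.ofReal_pos.mpr hψp).ne')
          (Or.inl ENNReal.ofReal_ne_top)]
        ring
    _ = ENNReal.ofReal (lam ^ ((d:ℝ) / p) / ζ p) *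
        (eLpNorm f (ENNReal.ofReal p) volume / ENNReal.ofReal (ψ p)) := by
        rw [ENNReal.ofReal_div_of_pos hζp]
    _ ≤ ENNReal.ofReal (⨆ q : Set.Ioo a b, (lam ^ (d:ℝ)) ^ (1 / q.1) / ζ q.1) *
        ⨆ q ∈ Set.Ioo a b,
          eLpNorm f (ENNReal.ofReal q) volume / ENNReal.ofReal (ψ q) := by
        exact mul_le_mul' (ENNReal.ofReal_le_ofReal hφ) (le_iSup₂ (f := fun q (_ : q ∈ Set.Ioo a b) =>
            eLpNorm f (ENNReal.ofReal q) volume / ENNReal.ofReal (ψ q)) p hp)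
end

section
/- There exists a constant C > 0 such that for all λ ≥ 1 and all r > 2, the function u(x) = ∫_{-1}^1 cos(λxy)|y|^{-1/2} dy satisfies |u|_r ≥ C·λ^{-1/r}·(r-2)^{-1/r}. -/
open MeasureTheory Real Set intervalIntegral

lemma ii_pow (a b : ℝ) : IntervalIntegrable (fun t : ℝ => t ^ (-(1/2):ℝ)) volume a b :=
  intervalIntegral.intervalIntegrable_rpow' (by norm_num)

lemma meas_integrand : Measurable (fun t : ℝ => Real.cos t * t ^ (-(1/2):ℝ)) :=
  (Real.measurable_cos).mul (measurable_id.pow_const _)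

lemma ii_cos_pow (a b : ℝ) :
    IntervalIntegrable (fun t : ℝ => Real.cos t * t ^ (-(1/2):ℝ)) volume a b := by
  apply (ii_pow a b).mono_fun meas_integrand.aestronglyMeasurable
  filter_upwards with t
  rw [Real.norm_eq_abs, Real.norm_eq_abs, abs_mul]
  calc |Real.cos t| * |t ^ (-(1/2):ℝ)| ≤ 1 * |t ^ (-(1/2):ℝ)| :=
        mul_le_mul_of_nonneg_right (Real.abs_cos_le_one t) (abs_nonneg _)
    _ = |t ^ (-(1/2):ℝ)| := one_mul _

lemma int_pow_val (a b : ℝ) :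
    ∫ t in a..b, t ^ (-(1/2):ℝ) = 2 * (Real.sqrt b - Real.sqrt a) := by
  rw [integral_rpow (Or.inl (by norm_num))]
  have h1 : (-(1/2):ℝ) + 1 = 1/2 := by norm_num
  rw [h1, ← Real.sqrt_eq_rpow, ← Real.sqrt_eq_rpow]; ring

lemma rpow_neg_half_eq {x : ℝ} : x ^ (-(1/2):ℝ) = (Real.sqrt x)⁻¹ := by
  rcases le_or_gt 0 x with h | h
  · rw [Real.rpow_neg h, Real.sqrt_eq_rpow]
  · rw [Real.rpow_def_of_neg h, Real.sqrt_eq_zero_of_nonpos h.le]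
    rw [show (-(1/2):ℝ) * Real.pi = -(Real.pi/2) by ring, Real.cos_neg, Real.cos_pi_div_two]
    simp

lemma rpow_neg_half_nonneg (x : ℝ) : 0 ≤ x ^ (-(1/2):ℝ) := by
  rw [rpow_neg_half_eq]; positivity

lemma rpow_neg_half_le {a t : ℝ} (ha : 0 < a) (hat : a ≤ t) :
    t ^ (-(1/2):ℝ) ≤ (Real.sqrt a)⁻¹ := by
  rw [rpow_neg_half_eq]
  exact inv_anti₀ (Real.sqrt_pos.mpr ha) (Real.sqrt_le_sqrt hat)

/-- bound below on a segment where cos is decreasing (subset of [0,π]) -/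
lemma seg_lb {a b : ℝ} (ha : 0 ≤ a) (hab : a ≤ b) (hb : b ≤ Real.pi) :
    Real.cos b * (2 * (Real.sqrt b - Real.sqrt a)) ≤
      ∫ t in a..b, Real.cos t * t ^ (-(1/2):ℝ) := by
  have h := intervalIntegral.integral_mono_on (a := a) (b := b) (μ := volume)
    (f := fun t => Real.cos b * t ^ (-(1/2):ℝ))
    (g := fun t => Real.cos t * t ^ (-(1/2):ℝ))
    hab ((ii_pow a b).const_mul _) (ii_cos_pow a b) ?_
  · calc Real.cos b * (2 * (Real.sqrt b - Real.sqrt a))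
        = ∫ t in a..b, Real.cos b * t ^ (-(1/2):ℝ) := by
          rw [intervalIntegral.integral_const_mul, int_pow_val]
      _ ≤ _ := h
  · intro t ht
    exact mul_le_mul_of_nonneg_right
      (Real.cos_le_cos_of_nonneg_of_le_pi (le_trans ha ht.1) hb ht.2)
      (rpow_neg_half_nonneg t)

/-- bound below on a segment where cos ≤ 0 -/
lemma seg_lb_neg {a b : ℝ} (ha : 0 < a) (hab : a ≤ b)
    (hcos : ∀ t ∈ Icc a b, Real.cos t ≤ 0) :
    (Real.sqrt a)⁻¹ * (Real.sin b - Real.sin a) ≤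
      ∫ t in a..b, Real.cos t * t ^ (-(1/2):ℝ) := by
  have h := intervalIntegral.integral_mono_on (a := a) (b := b) (μ := volume)
    (f := fun t => (Real.sqrt a)⁻¹ * Real.cos t)
    (g := fun t => Real.cos t * t ^ (-(1/2):ℝ))
    hab (((intervalIntegrable_cos)).const_mul _) (ii_cos_pow a b) ?_
  · calc (Real.sqrt a)⁻¹ * (Real.sin b - Real.sin a)
        = ∫ t in a..b, (Real.sqrt a)⁻¹ * Real.cos t := by
          rw [intervalIntegral.integral_const_mul, integral_cos]
      _ ≤ _ := h
  · intro t ht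
    rw [mul_comm]
    exact mul_le_mul_of_nonpos_left (rpow_neg_half_le ha ht.1) (hcos t ht)

lemma seg_nonneg {a b : ℝ} (ha : 0 ≤ a) (hab : a ≤ b) (hb : b ≤ Real.pi/2) :
    0 ≤ ∫ t in a..b, Real.cos t * t ^ (-(1/2):ℝ) := by
  apply intervalIntegral.integral_nonneg hab
  intro t ht
  have : 0 ≤ Real.cos t := Real.cos_nonneg_of_mem_Icc
    ⟨by linarith [ht.1], le_trans ht.2 hb⟩
  exact mul_nonneg this (rpow_neg_half_nonneg t)

noncomputable def Fr (L : ℝ) : ℝ := ∫ t in (0:ℝ)..L, Real.cos t * t ^ (-(1/2):ℝ)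

-- numeric helpers
lemma sqrt_half_bounds : 0.70710 ≤ Real.sqrt (1/2) ∧ Real.sqrt (1/2) ≤ 0.70711 := by
  have h := Real.sq_sqrt (show (0:ℝ) ≤ 1/2 by norm_num)
  have h2 := Real.sqrt_nonneg (1/2 : ℝ)
  constructor <;> nlinarith

lemma cos_half_lb : 0.87174 ≤ Real.cos (1/2) := by
  have h := Real.cos_bound (x := 1/2) (by rw [abs_of_nonneg] <;> norm_num)
  rw [abs_le] at h
  have := abs_le.mp (abs_le.mpr ⟨h.1, h.2⟩)
  rw [show |(1:ℝ)/2| = 1/2 by rw [abs_of_nonneg] <;> norm_num] at h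
  nlinarith [h.1]

lemma cos_one_lb : 0.44791 ≤ Real.cos 1 := by
  have h := Real.cos_bound (x := 1) (by norm_num)
  rw [abs_le] at h
  rw [show |(1:ℝ)| = 1 by norm_num] at h
  nlinarith [h.1]

lemma inv_sqrt_le {x b : ℝ} (hb : 0 < b) (h : 1 ≤ b^2 * x) : (Real.sqrt x)⁻¹ ≤ b := by
  have hx : 0 < x := by nlinarith
  have hs : 0 < Real.sqrt x := Real.sqrt_pos.mpr hx
  have h2 : (1:ℝ) ≤ (b * Real.sqrt x)^2 := by
    rw [mul_pow, Real.sq_sqrt hx.le]; linarith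
  have h1 : 1 ≤ b * Real.sqrt x := by
    nlinarith [h2, mul_pos hb hs]
  rw [inv_eq_one_div, div_le_iff₀ hs]
  linarith [h1]

lemma sqrt_ge {x b : ℝ} (hb : 0 ≤ b) (h : b^2 ≤ x) : b ≤ Real.sqrt x := by
  have hx : 0 ≤ x := by nlinarith
  nlinarith [Real.sq_sqrt hx, Real.sqrt_nonneg x]

lemma inv_sqrt_pi_div_two : (Real.sqrt (Real.pi/2))⁻¹ ≤ 0.798 := by
  have hpi := Real.pi_gt_d6
  exact inv_sqrt_le (by norm_num) (by nlinarith)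

lemma inv_sqrt_3pi_div_4 : (Real.sqrt (3*Real.pi/4))⁻¹ ≤ 0.6516 := by
  have hpi := Real.pi_gt_d6
  exact inv_sqrt_le (by norm_num) (by nlinarith)

lemma inv_sqrt_pi : (Real.sqrt Real.pi)⁻¹ ≤ 0.5642 := by
  have hpi := Real.pi_gt_d6
  exact inv_sqrt_le (by norm_num) (by nlinarith)

lemma sqrt_le' {x b : ℝ} (hb : 0 ≤ b) (h : x ≤ b^2) : Real.sqrt x ≤ b := by
  rcases le_or_gt x 0 with h0 | h0
  · rw [Real.sqrt_eq_zero_of_nonpos h0]; exact hb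
  · nlinarith [Real.sq_sqrt h0.le, Real.sqrt_nonneg x]

lemma sqrt_two_bounds : 1.41421 ≤ Real.sqrt 2 ∧ Real.sqrt 2 ≤ 1.41422 :=
  ⟨sqrt_ge (by norm_num) (by norm_num), sqrt_le' (by norm_num) (by norm_num)⟩

lemma sin_3pi4 : Real.sin (3*Real.pi/4) = Real.sqrt 2 / 2 := by
  rw [show 3*Real.pi/4 = Real.pi - Real.pi/4 by ring, Real.sin_pi_sub, Real.sin_pi_div_four]

lemma F_pi_lb : 0.8006 ≤ Fr Real.pi := by
  have hpi := Real.pi_gt_d6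
  have hpi' := Real.pi_lt_d2
  have e1 := intervalIntegral.integral_add_adjacent_intervals
    (ii_cos_pow 0 (1/2)) (ii_cos_pow (1/2) 1)
  have e2 := intervalIntegral.integral_add_adjacent_intervals
    (ii_cos_pow 0 1) (ii_cos_pow 1 (Real.pi/2))
  have e3 := intervalIntegral.integral_add_adjacent_intervals
    (ii_cos_pow 0 (Real.pi/2)) (ii_cos_pow (Real.pi/2) (3*Real.pi/4))
  have e4 := intervalIntegral.integral_add_adjacent_intervals
    (ii_cos_pow 0 (3*Real.pi/4)) (ii_cos_pow (3*Real.pi/4) Real.pi)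
  -- T1
  have t1 : (1.2328:ℝ) ≤ ∫ t in (0:ℝ)..(1/2), Real.cos t * t ^ (-(1/2):ℝ) := by
    have := seg_lb (a := 0) (b := 1/2) le_rfl (by norm_num) (by linarith)
    rw [Real.sqrt_zero] at this
    have h1 := sqrt_half_bounds.1
    have h2 := cos_half_lb
    have hc1 : Real.cos (1/2) ≤ 1 := Real.cos_le_one _
    nlinarith
  -- T2
  have t2 : (0.2623:ℝ) ≤ ∫ t in (1/2:ℝ)..1, Real.cos t * t ^ (-(1/2):ℝ) := by
    have := seg_lb (a := 1/2) (b := 1) (by norm_num) (by norm_num) (by linarith)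
    rw [Real.sqrt_one] at this
    have h1 := sqrt_half_bounds.2
    have h2 := cos_one_lb
    have hc1 : Real.cos 1 ≤ 1 := Real.cos_le_one _
    have h3 := sqrt_half_bounds.1
    nlinarith
  -- T3
  have t3 : (0:ℝ) ≤ ∫ t in (1:ℝ)..(Real.pi/2), Real.cos t * t ^ (-(1/2):ℝ) :=
    seg_nonneg (by norm_num) (by linarith) le_rfl
  -- T4
  have t4 : (-0.23374:ℝ) ≤ ∫ t in (Real.pi/2)..(3*Real.pi/4), Real.cos t * t ^ (-(1/2):ℝ) := by
    have := seg_lb_neg (a := Real.pi/2) (b := 3*Real.pi/4) (by linarith) (by linarith)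
      (fun t ht => Real.cos_nonpos_of_pi_div_two_le_of_le ht.1 (by linarith [ht.2]))
    rw [sin_3pi4, Real.sin_pi_div_two] at this
    have h1 := inv_sqrt_pi_div_two
    have h2 := sqrt_two_bounds.1
    have h3 : (0:ℝ) ≤ (Real.sqrt (Real.pi/2))⁻¹ := by positivity
    nlinarith
  -- T5
  have t5 : (-0.46076:ℝ) ≤ ∫ t in (3*Real.pi/4)..Real.pi, Real.cos t * t ^ (-(1/2):ℝ) := by
    have := seg_lb_neg (a := 3*Real.pi/4) (b := Real.pi) (by linarith) (by linarith)
      (fun t ht => Real.cos_nonpos_of_pi_div_two_le_of_le (by linarith [ht.1]) (by linarith [ht.2]))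
    rw [sin_3pi4, Real.sin_pi] at this
    have h1 := inv_sqrt_3pi_div_4
    have h2 := sqrt_two_bounds.2
    have h3 : (0:ℝ) ≤ (Real.sqrt (3*Real.pi/4))⁻¹ := by positivity
    nlinarith
  have : Fr Real.pi = (∫ t in (0:ℝ)..(1/2), Real.cos t * t ^ (-(1/2):ℝ))
      + (∫ t in (1/2:ℝ)..1, Real.cos t * t ^ (-(1/2):ℝ))
      + (∫ t in (1:ℝ)..(Real.pi/2), Real.cos t * t ^ (-(1/2):ℝ))
      + (∫ t in (Real.pi/2)..(3*Real.pi/4), Real.cos t * t ^ (-(1/2):ℝ))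
      + (∫ t in (3*Real.pi/4)..Real.pi, Real.cos t * t ^ (-(1/2):ℝ)) := by
    rw [Fr, ← e4, ← e3, ← e2, ← e1]
  rw [this]
  linarith

-- derivative helpers
lemma hasDeriv_H {t : ℝ} (ht : 0 < t) :
    HasDerivAt (fun s : ℝ => Real.sin s * s ^ (-(1/2):ℝ))
      (Real.cos t * t ^ (-(1/2):ℝ) + (-(1/2)) * (Real.sin t * t ^ (-(3/2):ℝ))) t := by
  have h1 := (Real.hasDerivAt_sin t)
  have h2 := Real.hasDerivAt_rpow_const (x := t) (p := (-(1/2):ℝ)) (Or.inl ht.ne')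
  have h3 := h1.mul h2
  refine h3.congr_deriv ?_
  have he : (-(1/2):ℝ) - 1 = -(3/2) := by norm_num
  rw [he]; ring

lemma hasDeriv_G {t : ℝ} (ht : 0 < t) :
    HasDerivAt (fun s : ℝ => -Real.cos s * s ^ (-(3/2):ℝ))
      (Real.sin t * t ^ (-(3/2):ℝ) + (3/2) * (Real.cos t * t ^ (-(5/2):ℝ))) t := by
  have h1 : HasDerivAt (fun s : ℝ => -Real.cos s) (Real.sin t) t := by
    have := (Real.hasDerivAt_cos t).neg; rw [neg_neg] at this; exact this
  have h2 := Real.hasDerivAt_rpow_const (x := t) (p := (-(3/2):ℝ)) (Or.inl ht.ne')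
  have := h1.mul h2
  refine this.congr_deriv ?_
  have : (-(3/2):ℝ) - 1 = -(5/2) := by norm_num
  rw [this]; ring

lemma contOn_rpow {c : ℝ} {a b : ℝ} (ha : 0 < a) (hab : a ≤ b) :
    ContinuousOn (fun t : ℝ => t ^ (c:ℝ)) (uIcc a b) := by
  apply ContinuousOn.rpow_const continuousOn_id
  intro x hx
  rw [uIcc_of_le hab] at hx
  refine Or.inl (fun h => ?_)
  have hx0 : x = 0 := h
  rw [hx0] at hx
  exact absurd hx.1 (by linarith)

lemma ii_sin_pow32 {a b : ℝ} (ha : 0 < a) (hab : a ≤ b) :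
    IntervalIntegrable (fun t : ℝ => Real.sin t * t ^ (-(3/2):ℝ)) volume a b :=
  (Real.continuous_sin.continuousOn.mul (contOn_rpow ha hab)).intervalIntegrable

lemma ii_cos_pow52 {a b : ℝ} (ha : 0 < a) (hab : a ≤ b) :
    IntervalIntegrable (fun t : ℝ => Real.cos t * t ^ (-(5/2):ℝ)) volume a b :=
  (Real.continuous_cos.continuousOn.mul (contOn_rpow ha hab)).intervalIntegrable

lemma ii_pow52 {a b : ℝ} (ha : 0 < a) (hab : a ≤ b) :
    IntervalIntegrable (fun t : ℝ => t ^ (-(5/2):ℝ)) volume a b :=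
  (contOn_rpow ha hab).intervalIntegrable

lemma ibp1 {a b : ℝ} (ha : 0 < a) (hab : a ≤ b) :
    ∫ t in a..b, Real.cos t * t ^ (-(1/2):ℝ)
      = Real.sin b * b ^ (-(1/2):ℝ) - Real.sin a * a ^ (-(1/2):ℝ)
        + (1/2) * ∫ t in a..b, Real.sin t * t ^ (-(3/2):ℝ) := by
  have key := intervalIntegral.integral_eq_sub_of_hasDerivAt
    (f := fun s : ℝ => Real.sin s * s ^ (-(1/2):ℝ))
    (f' := fun t => Real.cos t * t ^ (-(1/2):ℝ) + (-(1/2)) * (Real.sin t * t ^ (-(3/2):ℝ)))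
    (fun t htm => hasDeriv_H (by
      rw [uIcc_of_le hab] at htm; linarith [htm.1]))
    ?_
  · rw [intervalIntegral.integral_add (ii_cos_pow a b)
        ((ii_sin_pow32 ha hab).const_mul (-(1/2):ℝ)),
      intervalIntegral.integral_const_mul] at key
    linarith [key]
  · exact (ii_cos_pow a b).add ((ii_sin_pow32 ha hab).const_mul (-(1/2):ℝ))

lemma ibp2 {a b : ℝ} (ha : 0 < a) (hab : a ≤ b) :
    ∫ t in a..b, Real.sin t * t ^ (-(3/2):ℝ)
      = -Real.cos b * b ^ (-(3/2):ℝ) + Real.cos a * a ^ (-(3/2):ℝ)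
        - (3/2) * ∫ t in a..b, Real.cos t * t ^ (-(5/2):ℝ) := by
  have key := intervalIntegral.integral_eq_sub_of_hasDerivAt
    (f := fun s : ℝ => -Real.cos s * s ^ (-(3/2):ℝ))
    (f' := fun t => Real.sin t * t ^ (-(3/2):ℝ) + (3/2) * (Real.cos t * t ^ (-(5/2):ℝ)))
    (fun t htm => hasDeriv_G (by
      rw [uIcc_of_le hab] at htm; linarith [htm.1]))
    ((ii_sin_pow32 ha hab).add ((ii_cos_pow52 ha hab).const_mul _))
  rw [intervalIntegral.integral_add (ii_sin_pow32 ha hab)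
    ((ii_cos_pow52 ha hab).const_mul _), intervalIntegral.integral_const_mul] at key
  linarith [key]

lemma abs_int_le {a b : ℝ} {f g : ℝ → ℝ} (hab : a ≤ b)
    (hfi : IntervalIntegrable f volume a b) (hgi : IntervalIntegrable g volume a b)
    (hbound : ∀ t ∈ Icc a b, |f t| ≤ g t) :
    |∫ t in a..b, f t| ≤ ∫ t in a..b, g t := by
  rw [abs_le]
  constructor
  · have h := intervalIntegral.integral_mono_on hab hgi.neg hfi (fun t ht => by
      have := (abs_le.mp (hbound t ht)).1
      simpa using this)
    have h2 : ∫ u in a..b, (-g) u = -∫ u in a..b, g u := by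
      simp [intervalIntegral.integral_neg]
    rw [h2] at h
    linarith
  · apply intervalIntegral.integral_mono_on hab hfi hgi
    intro t ht
    exact (abs_le.mp (hbound t ht)).2

lemma pi_rpow_half_le : Real.pi ^ (-(1/2):ℝ) ≤ 0.5642 := by
  rw [rpow_neg_half_eq]; exact inv_sqrt_pi

lemma pi_rpow_32_le : Real.pi ^ (-(3/2):ℝ) ≤ 0.1796 := by
  have he : Real.pi ^ (-(3/2):ℝ) = Real.pi ^ (-1:ℝ) * Real.pi ^ (-(1/2):ℝ) := by
    rw [← Real.rpow_add Real.pi_pos]; norm_num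
  have h1 : Real.pi ^ (-1:ℝ) = Real.pi⁻¹ := Real.rpow_neg_one _
  have h2 : Real.pi⁻¹ ≤ 1/3.141592 := by
    have := Real.pi_gt_d6
    rw [inv_le_comm₀ Real.pi_pos (by norm_num)]
    norm_num; linarith
  have h3 := pi_rpow_half_le
  have h4 : (0:ℝ) ≤ Real.pi ^ (-(1/2):ℝ) := rpow_neg_half_nonneg _
  have h5 : (0:ℝ) ≤ Real.pi⁻¹ := by positivity
  rw [he, h1]
  nlinarith

lemma F_tail_lb {L : ℝ} (hL : Real.pi ≤ L) : 0.05 ≤ Fr L := by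
  have h0 : (0:ℝ) < Real.pi := Real.pi_pos
  have e0 := intervalIntegral.integral_add_adjacent_intervals
    (ii_cos_pow 0 Real.pi) (ii_cos_pow Real.pi L)
  have eF : Fr L = Fr Real.pi + ∫ t in Real.pi..L, Real.cos t * t ^ (-(1/2):ℝ) := by
    rw [Fr, Fr, e0]
  rw [eF, ibp1 h0 hL, ibp2 h0 hL]
  have hLpos : (0:ℝ) < L := lt_of_lt_of_le h0 hL
  -- bounds
  have hL12 : L ^ (-(1/2):ℝ) ≤ Real.pi ^ (-(1/2):ℝ) :=
    Real.rpow_le_rpow_of_nonpos h0 hL (by norm_num)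
  have hL12n : (0:ℝ) ≤ L ^ (-(1/2):ℝ) := rpow_neg_half_nonneg _
  have hL32n : (0:ℝ) ≤ L ^ (-(3/2):ℝ) := Real.rpow_nonneg hLpos.le _
  have hpi32n : (0:ℝ) ≤ Real.pi ^ (-(3/2):ℝ) := Real.rpow_nonneg h0.le _
  have hs : -(Real.pi ^ (-(1/2):ℝ)) ≤ Real.sin L * L ^ (-(1/2):ℝ) := by
    nlinarith [Real.neg_one_le_sin L]
  have hsp : Real.sin Real.pi * Real.pi ^ (-(1/2):ℝ) = 0 := by
    rw [Real.sin_pi]; ring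
  have hcp : Real.cos Real.pi * Real.pi ^ (-(3/2):ℝ) = -(Real.pi ^ (-(3/2):ℝ)) := by
    rw [Real.cos_pi]; ring
  have hcb : -(L ^ (-(3/2):ℝ)) ≤ -Real.cos L * L ^ (-(3/2):ℝ) := by
    nlinarith [Real.cos_le_one L]
  have hint : ∫ t in Real.pi..L, Real.cos t * t ^ (-(5/2):ℝ)
      ≤ (2/3) * (Real.pi ^ (-(3/2):ℝ) - L ^ (-(3/2):ℝ)) := by
    have hmono := intervalIntegral.integral_mono_on hL (ii_cos_pow52 h0 hL)
      (ii_pow52 h0 hL) (fun t ht => by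
        have htp : (0:ℝ) < t := lt_of_lt_of_le h0 ht.1
        have := Real.rpow_nonneg htp.le (-(5/2):ℝ)
        nlinarith [Real.cos_le_one t])
    have hval : ∫ t in Real.pi..L, t ^ (-(5/2):ℝ)
        = (2/3) * (Real.pi ^ (-(3/2):ℝ) - L ^ (-(3/2):ℝ)) := by
      rw [integral_rpow (Or.inr ⟨by norm_num, by
        rw [uIcc_of_le hL]; intro hmem; exact absurd hmem.1 (by linarith)⟩)]
      norm_num
      ring
    rw [hval] at hmono
    exact hmono
  have hFpi := F_pi_lb
  have h12 := pi_rpow_half_le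
  have h32 := pi_rpow_32_le
  rw [hsp, hcp]
  nlinarith

lemma F_one_lb : 0.8958 ≤ Fr 1 := by
  have := seg_lb (a := 0) (b := 1) le_rfl zero_le_one
    (by linarith [Real.pi_gt_d6])
  rw [Real.sqrt_zero, Real.sqrt_one] at this
  have := cos_one_lb
  rw [Fr]
  nlinarith [cos_one_lb, this]

lemma F_lb {L : ℝ} (hL : 1 ≤ L) : 0.05 ≤ Fr L := by
  have hpi := Real.pi_gt_d6
  have e0 := intervalIntegral.integral_add_adjacent_intervals
    (ii_cos_pow 0 1) (ii_cos_pow 1 L)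
  have eF : Fr L = Fr 1 + ∫ t in (1:ℝ)..L, Real.cos t * t ^ (-(1/2):ℝ) := by
    rw [Fr, Fr, e0]
  rcases le_or_gt L (Real.pi/2) with h | h
  · have h2 := seg_nonneg (a := 1) (b := L) (by norm_num) hL h
    rw [eF]
    linarith [F_one_lb]
  rcases le_or_gt L Real.pi with h2 | h2
  · have e1 := intervalIntegral.integral_add_adjacent_intervals
      (ii_cos_pow 1 (Real.pi/2)) (ii_cos_pow (Real.pi/2) L)
    have t3 := seg_nonneg (a := 1) (b := Real.pi/2) (by norm_num) (by linarith) le_rfl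
    have t4 := seg_lb_neg (a := Real.pi/2) (b := L) (by linarith) h.le
      (fun t ht => Real.cos_nonpos_of_pi_div_two_le_of_le ht.1 (by linarith [ht.2]))
    rw [Real.sin_pi_div_two] at t4
    have hsin : 0 ≤ Real.sin L := Real.sin_nonneg_of_nonneg_of_le_pi (by linarith) h2
    have hsin1 : Real.sin L ≤ 1 := Real.sin_le_one L
    have hw := inv_sqrt_pi_div_two
    have hwn : (0:ℝ) ≤ (Real.sqrt (Real.pi/2))⁻¹ := by positivity
    have hterm : (-0.798 : ℝ) ≤ ∫ t in (Real.pi/2)..L, Real.cos t * t ^ (-(1/2):ℝ) := by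
      nlinarith
    rw [eF, ← e1]
    linarith [F_one_lb]
  · exact F_tail_lb h2.le

lemma F_abs_le_two {L : ℝ} (h0 : 0 ≤ L) (hL : L ≤ 1) : |Fr L| ≤ 2 := by
  have h := abs_int_le (f := fun t => Real.cos t * t ^ (-(1/2):ℝ))
    (g := fun t => t ^ (-(1/2):ℝ)) h0 (ii_cos_pow 0 L) (ii_pow 0 L)
    (fun t _ => by
      rw [abs_mul]
      have h1 : |t ^ (-(1/2):ℝ)| = t ^ (-(1/2):ℝ) := abs_of_nonneg (rpow_neg_half_nonneg t)
      rw [h1]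
      nlinarith [Real.abs_cos_le_one t, rpow_neg_half_nonneg t, abs_nonneg (Real.cos t)])
  rw [int_pow_val, Real.sqrt_zero] at h
  have hs1 : Real.sqrt L ≤ 1 := sqrt_le' (by norm_num) (by nlinarith)
  have h2 : |Fr L| ≤ 2 * (Real.sqrt L - 0) := h
  linarith

lemma F_abs_le {L : ℝ} (h0 : 0 ≤ L) : |Fr L| ≤ 5 := by
  rcases le_or_gt L 1 with h | h
  · linarith [F_abs_le_two h0 h]
  have e0 := intervalIntegral.integral_add_adjacent_intervals
    (ii_cos_pow 0 1) (ii_cos_pow 1 L)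
  have eF : Fr L = Fr 1 + ∫ t in (1:ℝ)..L, Real.cos t * t ^ (-(1/2):ℝ) := by
    rw [Fr, Fr, e0]
  rw [eF, ibp1 zero_lt_one h.le]
  have h1 : |Fr 1| ≤ 2 := F_abs_le_two (by norm_num) le_rfl
  have hL12 : L ^ (-(1/2):ℝ) ≤ 1 :=
    Real.rpow_le_one_of_one_le_of_nonpos h.le (by norm_num)
  have hL12n : (0:ℝ) ≤ L ^ (-(1/2):ℝ) := rpow_neg_half_nonneg _
  have hs : |Real.sin L * L ^ (-(1/2):ℝ)| ≤ 1 := by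
    rw [abs_mul, abs_of_nonneg hL12n]
    nlinarith [Real.abs_sin_le_one L, abs_nonneg (Real.sin L)]
  have h1r : (1:ℝ) ^ (-(1/2):ℝ) = 1 := Real.one_rpow _
  have hs1 : |Real.sin 1 * (1:ℝ) ^ (-(1/2):ℝ)| ≤ 1 := by
    rw [h1r, mul_one]; exact Real.abs_sin_le_one 1
  have hintval : ∫ t in (1:ℝ)..L, t ^ (-(3/2):ℝ) = 2 * (1 - L ^ (-(1/2):ℝ)) := by
    rw [integral_rpow (Or.inr ⟨by norm_num, by
      rw [uIcc_of_le h.le]; intro hmem; exact absurd hmem.1 (by linarith)⟩)]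
    norm_num
    ring
  have hint : |∫ t in (1:ℝ)..L, Real.sin t * t ^ (-(3/2):ℝ)| ≤ 2 := by
    have := abs_int_le (f := fun t => Real.sin t * t ^ (-(3/2):ℝ))
      (g := fun t => t ^ (-(3/2):ℝ)) h.le (ii_sin_pow32 zero_lt_one h.le)
      ((contOn_rpow zero_lt_one h.le).intervalIntegrable)
      (fun t ht => by
        have htp : (0:ℝ) < t := by linarith [ht.1]
        have hn : (0:ℝ) ≤ t ^ (-(3/2):ℝ) := Real.rpow_nonneg htp.le _
        rw [abs_mul, abs_of_nonneg hn]
        nlinarith [Real.abs_sin_le_one t, abs_nonneg (Real.sin t)])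
    rw [hintval] at this
    calc |∫ t in (1:ℝ)..L, Real.sin t * t ^ (-(3/2):ℝ)| ≤ 2 * (1 - L ^ (-(1/2):ℝ)) := this
      _ ≤ 2 := by linarith
  set I := ∫ t in (1:ℝ)..L, Real.sin t * t ^ (-(3/2):ℝ) with hI
  set B := Real.sin L * L ^ (-(1/2):ℝ) - Real.sin 1 * (1:ℝ) ^ (-(1/2):ℝ) with hB
  have a1 := abs_add_le (Fr 1) (B + 1/2 * I)
  have a2 := abs_add_le B (1/2 * I)
  have a3 : |B| ≤ |Real.sin L * L ^ (-(1/2):ℝ)| + |Real.sin 1 * (1:ℝ) ^ (-(1/2):ℝ)| := by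
    rw [hB, sub_eq_add_neg]
    refine (abs_add_le _ _).trans ?_
    rw [abs_neg]
  have a4 : |1/2 * I| = 1/2 * |I| := by rw [abs_mul]; norm_num
  linarith

lemma abs_rpow_eq (y : ℝ) : |y| ^ (-(1/2):ℝ) = y ^ (-(1/2):ℝ) + (-y) ^ (-(1/2):ℝ) := by
  rw [rpow_neg_half_eq, rpow_neg_half_eq, rpow_neg_half_eq]
  rcases lt_trichotomy y 0 with h | h | h
  · rw [abs_of_neg h, Real.sqrt_eq_zero_of_nonpos h.le]
    simp
  · subst h; simp
  · rw [abs_of_pos h, Real.sqrt_eq_zero_of_nonpos (by linarith : -y ≤ 0)]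
    simp

lemma ii_abs_pow (a b : ℝ) :
    IntervalIntegrable (fun y : ℝ => |y| ^ (-(1/2):ℝ)) volume a b := by
  have h1 := ii_pow a b
  have h2 : IntervalIntegrable (fun y : ℝ => (-y) ^ (-(1/2):ℝ)) volume a b := by
    have := (ii_pow (-a) (-b))
    have h3 := (IntervalIntegrable.iff_comp_neg (f := fun t : ℝ => t ^ (-(1/2):ℝ)) (h := enorm_ne_top)).mp this
    simpa using h3
  have he : (fun y : ℝ => |y| ^ (-(1/2):ℝ))
      = fun y => y ^ (-(1/2):ℝ) + (-y) ^ (-(1/2):ℝ) := funext abs_rpow_eq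
  rw [he]
  exact h1.add h2

lemma ii_f (c a b : ℝ) :
    IntervalIntegrable (fun y => Real.cos (c*y) * |y| ^ (-(1/2):ℝ)) volume a b := by
  apply (ii_abs_pow a b).mono_fun
  · exact ((Real.measurable_cos.comp (measurable_const_mul c)).mul
      (measurable_abs.pow_const _)).aestronglyMeasurable
  · filter_upwards with t
    rw [Real.norm_eq_abs, Real.norm_eq_abs, abs_mul]
    have h1 : |(|t|) ^ (-(1/2):ℝ)| = |t| ^ (-(1/2):ℝ) :=
      abs_of_nonneg (by rw [rpow_neg_half_eq]; positivity)
    rw [h1]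
    nlinarith [Real.abs_cos_le_one (c*t), abs_nonneg (Real.cos (c*t)),
      (by rw [rpow_neg_half_eq]; positivity : (0:ℝ) ≤ |t| ^ (-(1/2):ℝ))]

/-- evenness: the full integral is twice the right-half integral -/
lemma U_even (c : ℝ) :
    (∫ y in (-1:ℝ)..1, Real.cos (c*y) * |y| ^ (-(1/2):ℝ))
      = 2 * ∫ y in (0:ℝ)..1, Real.cos (c*y) * y ^ (-(1/2):ℝ) := by
  have hsplit := intervalIntegral.integral_add_adjacent_intervals
    (ii_f c (-1) 0) (ii_f c 0 1)
  have hneg : (∫ y in (-1:ℝ)..0, Real.cos (c*y) * |y| ^ (-(1/2):ℝ))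
      = ∫ y in (0:ℝ)..1, Real.cos (c*y) * |y| ^ (-(1/2):ℝ) := by
    have h := intervalIntegral.integral_comp_neg
      (a := (0:ℝ)) (b := 1) (fun y => Real.cos (c*y) * |y| ^ (-(1/2):ℝ))
    rw [neg_zero] at h
    rw [← h]
    congr 1
    ext y
    rw [mul_neg, Real.cos_neg, abs_neg]
  have hhalf : (∫ y in (0:ℝ)..1, Real.cos (c*y) * |y| ^ (-(1/2):ℝ))
      = ∫ y in (0:ℝ)..1, Real.cos (c*y) * y ^ (-(1/2):ℝ) := by
    apply intervalIntegral.integral_congr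
    intro y hy
    rw [uIcc_of_le (by norm_num : (0:ℝ) ≤ 1)] at hy
    dsimp only
    rw [abs_of_nonneg hy.1]
  rw [← hsplit, hneg, hhalf]
  ring

/-- substitution: for c > 0 -/
lemma U_subst {c : ℝ} (hc : 0 < c) :
    (∫ y in (0:ℝ)..1, Real.cos (c*y) * y ^ (-(1/2):ℝ))
      = c ^ (-(1/2):ℝ) * Fr c := by
  have key := intervalIntegral.integral_comp_mul_left
    (a := (0:ℝ)) (b := 1) (fun t => Real.cos t * t ^ (-(1/2):ℝ)) hc.ne'
  rw [mul_zero, mul_one] at key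
  -- key : ∫ y in 0..1, cos (c*y) * (c*y) ^ (-(1/2)) = c⁻¹ • ∫ t in 0..c, cos t * t^(-(1/2))
  have expand : ∀ y ∈ uIcc (0:ℝ) 1, Real.cos (c*y) * (c*y) ^ (-(1/2):ℝ)
      = c ^ (-(1/2):ℝ) * (Real.cos (c*y) * y ^ (-(1/2):ℝ)) := by
    intro y hy
    rw [uIcc_of_le (by norm_num : (0:ℝ) ≤ 1)] at hy
    rw [Real.mul_rpow hc.le hy.1]
    ring
  have e2 : (∫ y in (0:ℝ)..1, Real.cos (c*y) * (c*y) ^ (-(1/2):ℝ))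
      = c ^ (-(1/2):ℝ) * ∫ y in (0:ℝ)..1, Real.cos (c*y) * y ^ (-(1/2):ℝ) := by
    rw [← intervalIntegral.integral_const_mul]
    exact intervalIntegral.integral_congr expand
  rw [e2] at key
  have hcr : (0:ℝ) < c ^ (-(1/2):ℝ) := by
    rw [rpow_neg_half_eq]
    exact inv_pos.mpr (Real.sqrt_pos.mpr hc)
  have hinv : c⁻¹ = c ^ (-(1/2):ℝ) * c ^ (-(1/2):ℝ) := by
    rw [← Real.rpow_add hc]
    norm_num
    exact (Real.rpow_neg_one c).symm
  rw [smul_eq_mul, hinv] at key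
  apply mul_left_cancel₀ hcr.ne'
  rw [key]
  show c ^ (-(1/2):ℝ) * c ^ (-(1/2):ℝ) * Fr c
      = c ^ (-(1/2):ℝ) * (c ^ (-(1/2):ℝ) * Fr c)
  ring

noncomputable def U (lam x : ℝ) : ℝ :=
  ∫ y in (-1:ℝ)..1, Real.cos (lam * x * y) * |y| ^ (-(1/2):ℝ)

lemma U_eq (lam x : ℝ) : U lam x = 2 * ((lam*x) ^ (-(1/2):ℝ) * Fr (lam*x)) ∨ lam*x ≤ 0 := by
  rcases le_or_gt (lam*x) 0 with h | h
  · exact Or.inr h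
  · left; rw [U, U_even, U_subst h]

lemma U_lb {lam x : ℝ} (h : 1 ≤ lam * x) :
    0.1 * (lam*x) ^ (-(1/2):ℝ) ≤ |U lam x| := by
  have hpos : (0:ℝ) < lam * x := lt_of_lt_of_le zero_lt_one h
  have he : U lam x = 2 * ((lam*x) ^ (-(1/2):ℝ) * Fr (lam*x)) := by
    rw [U, U_even, U_subst hpos]
  have hF := F_lb h
  have hr : (0:ℝ) ≤ (lam*x) ^ (-(1/2):ℝ) := rpow_neg_half_nonneg _
  have : 0.1 * (lam*x) ^ (-(1/2):ℝ) ≤ U lam x := by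
    rw [he]; nlinarith
  have h0 : (0:ℝ) ≤ U lam x := by
    rw [he]; nlinarith
  rw [abs_of_nonneg h0]
  exact this

lemma U_ub {lam x : ℝ} (hpos : 0 < lam * x) : |U lam x| ≤ 10 * (lam*x) ^ (-(1/2):ℝ) := by
  have he : U lam x = 2 * ((lam*x) ^ (-(1/2):ℝ) * Fr (lam*x)) := by
    rw [U, U_even, U_subst hpos]
  have hF := F_abs_le (L := lam*x) hpos.le
  have hr : (0:ℝ) ≤ (lam*x) ^ (-(1/2):ℝ) := rpow_neg_half_nonneg _
  rw [he, abs_mul, abs_mul, abs_of_nonneg hr]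
  have h2 : |(2:ℝ)| = 2 := by norm_num
  rw [h2]
  nlinarith [abs_nonneg (Fr (lam*x))]

lemma U_ub4 (lam x : ℝ) : |U lam x| ≤ 4 := by
  have h := abs_int_le (a := (-1:ℝ)) (b := 1)
    (f := fun y => Real.cos (lam*x*y) * |y| ^ (-(1/2):ℝ))
    (g := fun y => |y| ^ (-(1/2):ℝ)) (by norm_num) (ii_f (lam*x) (-1) 1)
    (ii_abs_pow (-1) 1) (fun t _ => by
      rw [abs_mul]
      have h1 : |(|t|) ^ (-(1/2):ℝ)| = |t| ^ (-(1/2):ℝ) :=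
        abs_of_nonneg (by rw [rpow_neg_half_eq]; positivity)
      rw [h1]
      nlinarith [Real.abs_cos_le_one (lam*x*t), abs_nonneg (Real.cos (lam*x*t)),
        (by rw [rpow_neg_half_eq]; positivity : (0:ℝ) ≤ |t| ^ (-(1/2):ℝ))])
  have hval : (∫ y in (-1:ℝ)..1, |y| ^ (-(1/2):ℝ)) = 4 := by
    have he : (fun y : ℝ => |y| ^ (-(1/2):ℝ))
        = fun y => y ^ (-(1/2):ℝ) + (-y) ^ (-(1/2):ℝ) := funext abs_rpow_eq
    rw [he, intervalIntegral.integral_add (ii_pow (-1) 1) (by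
      have h3 := (IntervalIntegrable.iff_comp_neg (f := fun t : ℝ => t ^ (-(1/2):ℝ)) (h := enorm_ne_top)).mp (ii_pow 1 (-1))
      simpa using h3)]
    have hneg : (∫ y in (-1:ℝ)..1, (-y) ^ (-(1/2):ℝ)) = ∫ y in (-1:ℝ)..1, y ^ (-(1/2):ℝ) := by
      have h := intervalIntegral.integral_comp_neg (a := (-1:ℝ)) (b := 1)
        (fun y => y ^ (-(1/2):ℝ))
      simpa using h
    rw [hneg, int_pow_val, Real.sqrt_one, Real.sqrt_eq_zero_of_nonpos (by norm_num : (-1:ℝ) ≤ 0)]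
    norm_num
  rw [U]
  calc |∫ y in (-1:ℝ)..1, Real.cos (lam*x*y) * |y| ^ (-(1/2):ℝ)|
      ≤ ∫ y in (-1:ℝ)..1, |y| ^ (-(1/2):ℝ) := h
    _ = 4 := hval

lemma U_continuous (lam : ℝ) : Continuous (fun x => U lam x) := by
  apply intervalIntegral.continuous_of_dominated_interval
    (bound := fun y => |y| ^ (-(1/2):ℝ))
  · intro x
    exact ((Real.measurable_cos.comp (measurable_const_mul (lam*x))).mul
      (measurable_abs.pow_const _)).aestronglyMeasurable
  · intro x
    filter_upwards with t _
    rw [Real.norm_eq_abs, abs_mul]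
    have h1 : |(|t|) ^ (-(1/2):ℝ)| = |t| ^ (-(1/2):ℝ) :=
      abs_of_nonneg (by rw [rpow_neg_half_eq]; positivity)
    rw [h1]
    nlinarith [Real.abs_cos_le_one (lam*x*t), abs_nonneg (Real.cos (lam*x*t)),
      (by rw [rpow_neg_half_eq]; positivity : (0:ℝ) ≤ |t| ^ (-(1/2):ℝ))]
  · exact ii_abs_pow (-1) 1
  · filter_upwards with t _
    exact (Real.continuous_cos.comp ((continuous_mul_left lam).mul continuous_const)).mul
      continuous_const

lemma U_neg (lam x : ℝ) : U lam (-x) = U lam x := by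
  rw [U, U]
  apply intervalIntegral.integral_congr
  intro y _
  dsimp only
  rw [show lam * -x * y = -(lam*x*y) by ring, Real.cos_neg]

lemma g_cont (lam r : ℝ) (hr : 0 ≤ r) : Continuous (fun x => |U lam x| ^ r) :=
  ((U_continuous lam).abs).rpow_const (fun _ => Or.inr hr)

lemma g_ub {lam x r : ℝ} (hlx : 1 ≤ lam * x) (hlam : 0 < lam) (hx : 0 < x) (hr : 2 < r) :
    |U lam x| ^ r ≤ 10 ^ r * (lam ^ (-(r/2)) * x ^ (-(r/2))) := by
  have hpos : (0:ℝ) < lam * x := lt_of_lt_of_le zero_lt_one hlx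
  have h1 : |U lam x| ^ r ≤ (10 * (lam*x) ^ (-(1/2):ℝ)) ^ r :=
    Real.rpow_le_rpow (abs_nonneg _) (U_ub hpos) (by linarith)
  have e1 : (10 * (lam*x) ^ (-(1/2):ℝ)) ^ r
      = 10 ^ r * ((lam*x) ^ (-(1/2):ℝ)) ^ r :=
    Real.mul_rpow (by norm_num) (rpow_neg_half_nonneg _)
  have e2 : ((lam*x) ^ (-(1/2):ℝ)) ^ r = (lam*x) ^ (-(r/2)) := by
    rw [← Real.rpow_mul hpos.le]
    congr 1; ring
  have e3 : (lam*x) ^ (-(r/2)) = lam ^ (-(r/2)) * x ^ (-(r/2)) :=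
    Real.mul_rpow hlam.le hx.le
  rw [e1, e2, e3] at h1
  exact h1

lemma g_lb {lam x r : ℝ} (hlx : 1 ≤ lam * x) (hlam : 0 < lam) (hx : 0 < x) (hr : 2 < r) :
    (0.1:ℝ) ^ r * (lam ^ (-(r/2)) * x ^ (-(r/2))) ≤ |U lam x| ^ r := by
  have hpos : (0:ℝ) < lam * x := lt_of_lt_of_le zero_lt_one hlx
  have h1 : (0.1 * (lam*x) ^ (-(1/2):ℝ)) ^ r ≤ |U lam x| ^ r :=
    Real.rpow_le_rpow (by positivity) (U_lb hlx) (by linarith)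
  have e1 : ((0.1:ℝ) * (lam*x) ^ (-(1/2):ℝ)) ^ r
      = 0.1 ^ r * ((lam*x) ^ (-(1/2):ℝ)) ^ r :=
    Real.mul_rpow (by norm_num) (rpow_neg_half_nonneg _)
  have e2 : ((lam*x) ^ (-(1/2):ℝ)) ^ r = (lam*x) ^ (-(r/2)) := by
    rw [← Real.rpow_mul hpos.le]
    congr 1; ring
  have e3 : (lam*x) ^ (-(r/2)) = lam ^ (-(r/2)) * x ^ (-(r/2)) :=
    Real.mul_rpow hlam.le hx.le
  rw [e1, e2, e3] at h1
  exact h1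

lemma g_integrableOn_Ioi {lam r : ℝ} (hlam : 1 ≤ lam) (hr : 2 < r) :
    IntegrableOn (fun x => |U lam x| ^ r) (Ioi lam⁻¹) := by
  have hlam0 : (0:ℝ) < lam := lt_of_lt_of_le zero_lt_one hlam
  have ha : (0:ℝ) < lam⁻¹ := by positivity
  have hmaj : IntegrableOn (fun x : ℝ => (10 ^ r * lam ^ (-(r/2))) * x ^ (-(r/2))) (Ioi lam⁻¹) :=
    (integrableOn_Ioi_rpow_of_lt (by linarith) ha).const_mul _
  apply Integrable.mono' hmaj ((g_cont lam r (by linarith)).aestronglyMeasurable.restrict)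
  filter_upwards [ae_restrict_mem measurableSet_Ioi] with x hx
  have hx0 : (0:ℝ) < x := lt_trans ha hx
  have hlx : 1 ≤ lam * x := by
    rw [← mul_inv_cancel₀ hlam0.ne']
    exact mul_le_mul_of_nonneg_left (le_of_lt hx) hlam0.le
  rw [Real.norm_eq_abs, abs_of_nonneg (Real.rpow_nonneg (abs_nonneg _) _)]
  calc |U lam x| ^ r ≤ 10 ^ r * (lam ^ (-(r/2)) * x ^ (-(r/2))) := g_ub hlx hlam0 hx0 hr
    _ = (10 ^ r * lam ^ (-(r/2))) * x ^ (-(r/2)) := by ring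

lemma g_integrable {lam r : ℝ} (hlam : 1 ≤ lam) (hr : 2 < r) :
    Integrable (fun x => |U lam x| ^ r) := by
  have hlam0 : (0:ℝ) < lam := lt_of_lt_of_le zero_lt_one hlam
  have ha : (0:ℝ) < lam⁻¹ := by positivity
  set g := fun x => |U lam x| ^ r with hg
  have hIoi := g_integrableOn_Ioi hlam hr
  have hIcc : IntegrableOn g (Icc (-lam⁻¹) lam⁻¹) :=
    ((g_cont lam r (by linarith)).continuousOn).integrableOn_compact isCompact_Icc
  have hIio : IntegrableOn g (Iio (-lam⁻¹)) := by
    have hcomp := (MeasurePreserving.integrableOn_comp_preimage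
      (Measure.measurePreserving_neg (volume : Measure ℝ))
      (Homeomorph.neg ℝ).measurableEmbedding).2 hIoi
    have hpre : ((Neg.neg : ℝ → ℝ) ⁻¹' (Ioi lam⁻¹) : Set ℝ) = Iio (-lam⁻¹) := by
      ext x
      simp [lt_neg]
    have hfun : ((fun x => |U lam x| ^ r) ∘ (Neg.neg : ℝ → ℝ)) = g := by
      funext x
      show |U lam (-x)| ^ r = g x
      rw [hg]
      dsimp only
      rw [U_neg]
    rw [hpre, hfun] at hcomp
    exact hcomp
  have huniv : (univ : Set ℝ) = Iio (-lam⁻¹) ∪ (Icc (-lam⁻¹) lam⁻¹ ∪ Ioi lam⁻¹) := by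
    ext x
    simp only [mem_univ, mem_union, mem_Iio, mem_Icc, mem_Ioi, true_iff]
    rcases lt_or_ge x (-lam⁻¹) with h | h
    · exact Or.inl h
    rcases le_or_gt x lam⁻¹ with h2 | h2
    · exact Or.inr (Or.inl ⟨h, h2⟩)
    · exact Or.inr (Or.inr h2)
  rw [← integrableOn_univ, huniv]
  exact hIio.union (hIcc.union hIoi)


/-- There is `C > 0` such that for all `λ ≥ 1` and `r > 2`, the oscillating
transform `u(x) = ∫_{-1}^1 cos(λxy)|y|^{-1/2} dy` of `f₀` satisfies
`|u|_r ≥ C λ^{-1/r} (r-2)^{-1/r}`. -/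
theorem stmt13 :
    ∃ C : ℝ, 0 < C ∧
      ∀ lam : ℝ, 1 ≤ lam → ∀ r : ℝ, 2 < r →
        C * lam ^ (-(1 / r)) * (r - 2) ^ (-(1 / r)) ≤
          (∫ x : ℝ,
            |∫ y in (-1 : ℝ)..1, Real.cos (lam * x * y) * |y| ^ (-(1/2) : ℝ)| ^ r)
            ^ (1 / r) := by
  refine ⟨0.1, by norm_num, fun lam hlam r hr => ?_⟩
  have hlam0 : (0:ℝ) < lam := lt_of_lt_of_le zero_lt_one hlam
  have ha : (0:ℝ) < lam⁻¹ := by positivity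
  have hr0 : (0:ℝ) < r := by linarith
  have hr2 : (0:ℝ) < r - 2 := by linarith
  show 0.1 * lam ^ (-(1/r)) * (r-2) ^ (-(1/r)) ≤ (∫ x : ℝ, |U lam x| ^ r) ^ (1/r)
  set P := ∫ x : ℝ, |U lam x| ^ r with hP
  set K := (0.1:ℝ) ^ r * lam ^ (-(r/2)) with hK
  have hKpos : 0 < K := by
    rw [hK]
    exact mul_pos (Real.rpow_pos_of_pos (by norm_num) _) (Real.rpow_pos_of_pos hlam0 _)
  -- lower bound on Ioi
  have hφint : IntegrableOn (fun x : ℝ => K * x ^ (-(r/2))) (Ioi lam⁻¹) :=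
    (integrableOn_Ioi_rpow_of_lt (by linarith) ha).const_mul _
  have h1 : (∫ x in Ioi lam⁻¹, K * x ^ (-(r/2)))
      ≤ ∫ x in Ioi lam⁻¹, |U lam x| ^ r := by
    apply setIntegral_mono_on hφint (g_integrableOn_Ioi hlam hr) measurableSet_Ioi
    intro x hx
    have hx0 : (0:ℝ) < x := lt_trans ha hx
    have hlx : 1 ≤ lam * x := by
      rw [← mul_inv_cancel₀ hlam0.ne']
      exact mul_le_mul_of_nonneg_left (le_of_lt hx) hlam0.le
    calc K * x ^ (-(r/2)) = 0.1 ^ r * (lam ^ (-(r/2)) * x ^ (-(r/2))) := by rw [hK]; ring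
      _ ≤ |U lam x| ^ r := g_lb hlx hlam0 hx0 hr
  have h2 : (∫ x in Ioi lam⁻¹, |U lam x| ^ r) ≤ P :=
    setIntegral_le_integral (g_integrable hlam hr)
      (ae_of_all _ fun x => Real.rpow_nonneg (abs_nonneg _) _)
  -- value of the lower integral
  have hval : (∫ x in Ioi lam⁻¹, K * x ^ (-(r/2)))
      = K * (lam ^ (r/2 - 1) * (2/(r-2))) := by
    rw [MeasureTheory.integral_const_mul, integral_Ioi_rpow_of_lt (by linarith) ha]
    have e1 : (lam⁻¹) ^ (-(r/2) + 1) = lam ^ (r/2 - 1) := by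
      rw [Real.inv_rpow hlam0.le, ← Real.rpow_neg hlam0.le]
      congr 1; ring
    rw [e1]
    have hne : -(r/2) + 1 ≠ 0 := by intro h; apply hr2.ne'; linarith
    congr 1
    rw [div_eq_iff hne]
    have h2 : (2/(r-2)) * (-(r/2)+1) = -1 := by
      rw [div_mul_eq_mul_div, show (2:ℝ) * (-(r/2)+1) = -(r-2) by ring, neg_div,
        div_self hr2.ne']
    calc -lam ^ (r/2-1) = lam ^ (r/2-1) * ((2/(r-2)) * (-(r/2)+1)) := by rw [h2]; ring
      _ = lam ^ (r/2-1) * (2/(r-2)) * (-(r/2)+1) := by ring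
  have hsum : lam ^ (-(r/2)) * lam ^ (r/2 - 1) = lam⁻¹ := by
    rw [← Real.rpow_add hlam0, show -(r/2) + (r/2 - 1) = -1 by ring, Real.rpow_neg_one]
  have hTP : (0.1:ℝ) ^ r * (lam⁻¹ * (r-2)⁻¹) ≤ P := by
    have step : K * (lam ^ (r/2 - 1) * (2/(r-2)))
        = lam⁻¹ * (0.1 ^ r * (2 * (r-2)⁻¹)) := by
      rw [hK]
      rw [div_eq_mul_inv]
      calc (0.1:ℝ) ^ r * lam ^ (-(r/2)) * (lam ^ (r/2 - 1) * (2 * (r-2)⁻¹))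
          = (lam ^ (-(r/2)) * lam ^ (r/2 - 1)) * (0.1 ^ r * (2 * (r-2)⁻¹)) := by ring
        _ = lam⁻¹ * (0.1 ^ r * (2 * (r-2)⁻¹)) := by rw [hsum]
    have h01 : (0:ℝ) < 0.1 ^ r := Real.rpow_pos_of_pos (by norm_num) _
    have hr2i : (0:ℝ) < (r-2)⁻¹ := by positivity
    have hle : (0.1:ℝ) ^ r * (lam⁻¹ * (r-2)⁻¹) ≤ lam⁻¹ * (0.1 ^ r * (2 * (r-2)⁻¹)) := by
      nlinarith [mul_pos (mul_pos h01 ha) hr2i]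
    calc (0.1:ℝ) ^ r * (lam⁻¹ * (r-2)⁻¹) ≤ lam⁻¹ * (0.1 ^ r * (2 * (r-2)⁻¹)) := hle
      _ = K * (lam ^ (r/2 - 1) * (2/(r-2))) := step.symm
      _ = ∫ x in Ioi lam⁻¹, K * x ^ (-(r/2)) := hval.symm
      _ ≤ ∫ x in Ioi lam⁻¹, |U lam x| ^ r := h1
      _ ≤ P := h2
  -- conclude via rpow x ↦ x^(1/r)
  have hTnn : (0:ℝ) ≤ 0.1 ^ r * (lam⁻¹ * (r-2)⁻¹) := by positivity
  have final1 : ((0.1:ℝ) ^ r * (lam⁻¹ * (r-2)⁻¹)) ^ (1/r) ≤ P ^ (1/r) :=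
    Real.rpow_le_rpow hTnn hTP (by positivity)
  have hTeq : ((0.1:ℝ) ^ r * (lam⁻¹ * (r-2)⁻¹)) ^ (1/r)
      = 0.1 * lam ^ (-(1/r)) * (r-2) ^ (-(1/r)) := by
    rw [Real.mul_rpow (by positivity) (by positivity),
      Real.mul_rpow (by positivity) (by positivity)]
    rw [← Real.rpow_mul (by norm_num : (0:ℝ) ≤ 0.1),
      mul_one_div_cancel hr0.ne', Real.rpow_one]
    rw [Real.inv_rpow hlam0.le, ← Real.rpow_neg hlam0.le]
    rw [Real.inv_rpow hr2.le, ← Real.rpow_neg hr2.le]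
    ring
  rw [← hTeq]
  exact final1
end

section
/- Assume the lower bound |u|_{q} ≥ C₁·λ^{-1/q}·(q-2)^{-1/q} for q = p/(p-1), p ∈ (1,2), and the norm computation |f₀|_p = (4/(2-p))^{1/p}. Then λ^{1/q}·|u|_q/|f₀|_p ≥ C₂·(p-1)^{1/p - 1} ≥ C₂ for a constant C₂ > 0 independent of p ∈ (1,2) and λ ≥ 2. In particular inf_{λ≥2} inf_{p∈(1,2)} λ^{1/q}|u|_q/|f₀|_p > 0. -/
open Real Set

/-- The key computation in Theorem 4 of the paper.  If `Nu` is any quantity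
(e.g. `|u|_q`) satisfying the lower bound `Nu ≥ C₁ λ^{-1/q} (q-2)^{-1/q}`
with `q = p/(p-1)`, and `Nf = (4/(2-p))^{1/p}` (the `L^p` norm of `f₀`), then
`λ^{1/q} Nu / Nf ≥ C₂ (p-1)^{1/p-1} ≥ C₂` for a constant `C₂ > 0` independent of
`p ∈ (1,2)` and `λ ≥ 2`; in particular the double infimum is positive. -/
theorem stmt14 (C₁ : ℝ) (hC₁ : 0 < C₁) :
    ∃ C₂ : ℝ, 0 < C₂ ∧
      ∀ lam : ℝ, 2 ≤ lam → ∀ p : ℝ, p ∈ Set.Ioo (1 : ℝ) 2 →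
        ∀ Nu Nf : ℝ,
          C₁ * lam ^ (-(1 / (p / (p - 1)))) * (p / (p - 1) - 2) ^ (-(1 / (p / (p - 1)))) ≤ Nu →
          Nf = (4 / (2 - p)) ^ (1 / p) →
          C₂ * (p - 1) ^ (1 / p - 1 : ℝ) ≤ lam ^ (1 / (p / (p - 1))) * Nu / Nf ∧
          C₂ ≤ C₂ * (p - 1) ^ (1 / p - 1 : ℝ) := by
  refine ⟨C₁ * Real.exp (-3) / 4, by positivity, ?_⟩
  intro lam hlam p hp Nu Nf hNu hNf
  obtain ⟨hp1, hp2⟩ := hp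
  have hp0 : (0:ℝ) < p := by linarith
  have hpm : (0:ℝ) < p - 1 := by linarith
  have h2p : (0:ℝ) < 2 - p := by linarith
  have hlam0 : (0:ℝ) < lam := by linarith
  have hsinv : 1 / (p / (p - 1)) = (p - 1) / p := one_div_div _ _
  have hqsub : p / (p - 1) - 2 = (2 - p) / (p - 1) := by field_simp; ring
  have hNf0 : 0 < Nf := by
    rw [hNf]; exact Real.rpow_pos_of_pos (by positivity) _
  rw [hsinv, hqsub] at hNu
  rw [hsinv]
  -- the second inequality
  have h2 : C₁ * Real.exp (-3) / 4 ≤ C₁ * Real.exp (-3) / 4 * (p - 1) ^ (1 / p - 1 : ℝ) := by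
    nth_rewrite 1 [← mul_one (C₁ * Real.exp (-3) / 4)]
    refine mul_le_mul_of_nonneg_left ?_ (by positivity)
    exact Real.one_le_rpow_of_pos_of_le_one_of_nonpos hpm (by linarith)
      (by rw [sub_nonpos]; rw [div_le_one hp0]; linarith)
  refine ⟨?_, h2⟩
  -- first inequality
  rw [le_div_iff₀ hNf0]
  have hlamne : lam ^ ((p - 1) / p : ℝ) ≠ 0 := (Real.rpow_pos_of_pos hlam0 _).ne'
  have key : C₁ * ((2 - p) / (p - 1)) ^ (-((p - 1) / p) : ℝ) ≤ lam ^ ((p - 1) / p : ℝ) * Nu := by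
    calc C₁ * ((2 - p) / (p - 1)) ^ (-((p - 1) / p) : ℝ)
        = lam ^ ((p - 1) / p : ℝ) *
          (C₁ * lam ^ (-((p - 1) / p) : ℝ) * ((2 - p) / (p - 1)) ^ (-((p - 1) / p) : ℝ)) := by
          rw [Real.rpow_neg hlam0.le]
          field_simp
      _ ≤ lam ^ ((p - 1) / p : ℝ) * Nu :=
          mul_le_mul_of_nonneg_left hNu (Real.rpow_pos_of_pos hlam0 _).le
  refine le_trans ?_ key
  rw [hNf]
  -- reduce to a log inequality
  set L1 := Real.log (p - 1) with hL1def
  set L2 := Real.log (2 - p) with hL2def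
  set L4 := Real.log 4 with hL4def
  have hlog1 : 1 - (p - 1)⁻¹ ≤ L1 := Real.one_sub_inv_le_log_of_pos hpm
  have hlog2 : 1 - (2 - p)⁻¹ ≤ L2 := Real.one_sub_inv_le_log_of_pos h2p
  have hlog4 : 0 ≤ L4 := Real.log_nonneg (by norm_num)
  have e1 : ((p - 1 : ℝ)) ^ (1 / p - 1 : ℝ) = Real.exp (L1 * (1 / p - 1)) :=
    Real.rpow_def_of_pos hpm _
  have e2 : ((4 / (2 - p) : ℝ)) ^ (1 / p : ℝ) = Real.exp ((L4 - L2) * (1 / p)) := by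
    rw [Real.rpow_def_of_pos (by positivity), Real.log_div (by norm_num) h2p.ne']
  have e3 : (((2 - p) / (p - 1) : ℝ)) ^ (-((p - 1) / p) : ℝ)
      = Real.exp ((L2 - L1) * (-((p - 1) / p))) := by
    rw [Real.rpow_def_of_pos (by positivity), Real.log_div h2p.ne' hpm.ne']
  rw [e1, e2, e3]
  have lhs_eq : C₁ * Real.exp (-3) / 4 * Real.exp (L1 * (1 / p - 1)) *
      Real.exp ((L4 - L2) * (1 / p))
      = C₁ * Real.exp (-3 - L4 + L1 * (1 / p - 1) + (L4 - L2) * (1 / p)) := by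
    rw [Real.exp_add, Real.exp_add, Real.exp_sub, hL4def,
      Real.exp_log (by norm_num : (0:ℝ) < 4)]
    ring
  rw [lhs_eq]
  refine mul_le_mul_of_nonneg_left (Real.exp_le_exp.2 ?_) hC₁.le
  -- exponent inequality
  have hA : p - 2 ≤ (p - 1) * L1 := by
    have h := mul_le_mul_of_nonneg_left hlog1 hpm.le
    have : (p - 1) * (1 - (p - 1)⁻¹) = p - 2 := by field_simp; ring
    linarith [this ▸ h]
  have hB : 1 - p ≤ (2 - p) * L2 := by
    have h := mul_le_mul_of_nonneg_left hlog2 h2p.le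
    have : (2 - p) * (1 - (2 - p)⁻¹) = 1 - p := by field_simp; ring
    linarith [this ▸ h]
  have hC : 0 ≤ (p - 1) * L4 := mul_nonneg hpm.le hlog4
  have key2 : -3 * p ≤ (p - 1) * L4 + 2 * ((p - 1) * L1) + (2 - p) * L2 := by linarith
  rw [← sub_nonneg]
  have expand : (L2 - L1) * (-((p - 1) / p)) -
      (-3 - L4 + L1 * (1 / p - 1) + (L4 - L2) * (1 / p))
      = (1 / p) * (3 * p + ((p - 1) * L4 + 2 * ((p - 1) * L1) + (2 - p) * L2)) := by
    field_simp
    ring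
  rw [expand]
  apply mul_nonneg (by positivity)
  linarith
end
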